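/- Let C = VᵀV be an n×n real positive semidefinite matrix, where V is a d×n real matrix with columns v_1,…,v_n, and let s be an integer with 1 ≤ s ≤ d. Assume δ := min_{|T|=s} λ_min(C_{T,T}) > 0 and let λ_max(C) denote the largest eigenvalue of C. Let Ŝ ⊆ {1,…,n} with |Ŝ| = s be locally optimal for A-MESP: for every i ∈ Ŝ and j ∈ {1,…,n}∖Ŝ, tr(C_{T,T}^{-1}) ≥ tr(C_{Ŝ,Ŝ}^{-1}) where T = Ŝ∪{j}∖{i}. Then for every subset S ⊆ {1,…,n} with |S| = s, tr(C_{Ŝ,Ŝ}^{-1}) ≤ min{ (s/2)·(1 + λ_max(C)/δ), (1/2)·(n + s + (n−s)·λ_max(C)/δ) } · tr(C_{S,S}^{-1}). (That is, the local search algorithm yields a min{(s/2)(1+λ_max(C)/δ), (1/2)(n+s+(n−s)λ_max(C)/δ)}-approximation ratio for A-MESP.) -/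

import Mathlib

open Matrix Finset

noncomputable section

/-- `lam` lists the eigenvalues (with multiplicity) of the real symmetric matrix `X`,
via an orthogonal spectral decomposition. -/
def IsSpectralDecomp {m : Type*} [Fintype m] [DecidableEq m]
    (X : Matrix m m ℝ) (lam : m → ℝ) : Prop :=
  ∃ Q : Matrix m m ℝ, Q * Qᵀ = 1 ∧ X = Q * Matrix.diagonal lam * Qᵀ

/-- Principal submatrix `C_{S,S}`. -/
def subSub {n : ℕ} (C : Matrix (Fin n) (Fin n) ℝ) (S : Finset (Fin n)) :
    Matrix {i // i ∈ S} {i // i ∈ S} ℝ :=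
  Matrix.of fun a b => C a.1 b.1

/-- The value `λ_{i+1}` (1-based), i.e. the coordinate of `lam` of 0-based index `i`;
`0` when out of range. -/
def extVal {d : ℕ} (lam : Fin d → ℝ) : ℕ → ℝ :=
  fun i => if h : i < d then lam ⟨i, h⟩ else 0

/-- `∑_{i=k+1}^d λ_i` (1-based), i.e. the sum of the coordinates of 0-based index `≥ k`. -/
def tailSum {d : ℕ} (lam : Fin d → ℝ) (k : ℕ) : ℝ :=
  ∑ i ∈ Finset.univ.filter (fun i : Fin d => k ≤ (i : ℕ)), lam i

/-- `k = k(λ, s)`: an integer `0 ≤ k < s` with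
`λ_k > (1/(s-k)) ∑_{i=k+1}^d λ_i ≥ λ_{k+1}`, with the convention `λ₀ = +∞`. -/
def IsKIndex {d : ℕ} (lam : Fin d → ℝ) (s k : ℕ) : Prop :=
  k < s ∧ extVal lam k ≤ tailSum lam k / ((s : ℝ) - k) ∧
    (k = 0 ∨ tailSum lam k / ((s : ℝ) - k) < extVal lam (k - 1))

/-- `P` is the Moore–Penrose pseudoinverse of `X`. -/
def IsPseudoInv {d : ℕ} (X P : Matrix (Fin d) (Fin d) ℝ) : Prop :=
  X * P * X = X ∧ P * X * P = P ∧ (X * P)ᵀ = X * P ∧ (P * X)ᵀ = P * X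


lemma trace_inv_bounds {m : Type*} [Fintype m] [DecidableEq m] [Nonempty m]
    (A : Matrix m m ℝ) (hA : A.IsHermitian) (δ L : ℝ) (hδ : 0 < δ)
    (hlow : ∀ y : m → ℝ, δ * (y ⬝ᵥ y) ≤ y ⬝ᵥ (A *ᵥ y))
    (hup : ∀ y : m → ℝ, y ⬝ᵥ (A *ᵥ y) ≤ L * (y ⬝ᵥ y)) :
    (Fintype.card m : ℝ) / L ≤ A⁻¹.trace ∧ A⁻¹.trace ≤ (Fintype.card m : ℝ) / δ := by
  have heig : ∀ i, δ ≤ hA.eigenvalues i ∧ hA.eigenvalues i ≤ L := by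
    intro i
    have hv0 : (⇑(hA.eigenvectorBasis i) : m → ℝ) ≠ 0 :=
      fun h => hA.eigenvectorBasis.orthonormal.ne_zero i ((WithLp.ofLp_eq_zero 2).mp h)
    set v : m → ℝ := ⇑(hA.eigenvectorBasis i) with hv
    have hvv : 0 < v ⬝ᵥ v := by
      rcases lt_or_eq_of_le (Finset.sum_nonneg fun j _ => mul_self_nonneg (v j)) with h | h
      · exact h
      · exact absurd ((dotProduct_self_eq_zero).mp h.symm) hv0
    have he : v ⬝ᵥ (A *ᵥ v) = hA.eigenvalues i * (v ⬝ᵥ v) := by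
      rw [hA.mulVec_eigenvectorBasis, dotProduct_smul, smul_eq_mul]
    have h1 := hlow v
    have h2 := hup v
    rw [he] at h1 h2
    constructor
    · exact le_of_mul_le_mul_right h1 hvv
    · exact le_of_mul_le_mul_right h2 hvv
  have hLpos : 0 < L := lt_of_lt_of_le hδ (le_trans (heig (Classical.arbitrary m)).1 (heig (Classical.arbitrary m)).2)
  set lam := hA.eigenvalues with hlam
  have hne : ∀ i, lam i ≠ 0 := fun i => ne_of_gt (lt_of_lt_of_le hδ (heig i).1)
  set U : Matrix m m ℝ := (hA.eigenvectorUnitary : Matrix m m ℝ) with hUdef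
  have hUU : star U * U = 1 := Unitary.coe_star_mul_self hA.eigenvectorUnitary
  have hUU' : U * star U = 1 := Unitary.coe_mul_star_self hA.eigenvectorUnitary
  have hsp : A = U * diagonal lam * star U := by
    have := hA.spectral_theorem
    simpa using this
  set B : Matrix m m ℝ := U * diagonal (fun i => (lam i)⁻¹) * star U with hB
  have hDD : diagonal lam * diagonal (fun i => (lam i)⁻¹) = 1 := by
    rw [diagonal_mul_diagonal]
    convert diagonal_one
    exact mul_inv_cancel₀ (hne _)
  have hAB : A * B = 1 := by
    rw [hsp, hB]
    calc U * diagonal lam * star U * (U * diagonal (fun i => (lam i)⁻¹) * star U)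
        = U * diagonal lam * (star U * U) * (diagonal (fun i => (lam i)⁻¹) * star U) := by
          simp only [Matrix.mul_assoc]
      _ = U * (diagonal lam * diagonal (fun i => (lam i)⁻¹)) * star U := by
          rw [hUU]; simp only [Matrix.mul_one, Matrix.mul_assoc]
      _ = 1 := by rw [hDD, Matrix.mul_one, hUU']
  have hAinv : A⁻¹ = B := inv_eq_right_inv hAB
  have htr : A⁻¹.trace = ∑ i, (lam i)⁻¹ := by
    rw [hAinv, hB, Matrix.mul_assoc, trace_mul_comm, Matrix.mul_assoc, hUU,
      Matrix.mul_one, trace_diagonal]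
  constructor
  · rw [htr, div_eq_mul_inv]
    calc (Fintype.card m : ℝ) * L⁻¹ = ∑ _i : m, L⁻¹ := by
          rw [Finset.sum_const, nsmul_eq_mul, Finset.card_univ]
      _ ≤ ∑ i, (lam i)⁻¹ :=
          Finset.sum_le_sum fun i _ => inv_anti₀ (lt_of_lt_of_le hδ (heig i).1) (heig i).2
  · rw [htr, div_eq_mul_inv]
    calc (∑ i, (lam i)⁻¹) ≤ ∑ _i : m, δ⁻¹ :=
          Finset.sum_le_sum fun i _ => inv_anti₀ hδ (heig i).1
      _ = (Fintype.card m : ℝ) * δ⁻¹ := by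
          rw [Finset.sum_const, nsmul_eq_mul, Finset.card_univ]


lemma sum_ext {n : ℕ} (S : Finset (Fin n)) (y : {x // x ∈ S} → ℝ) (f : Fin n → ℝ) :
    ∑ i, (if h : i ∈ S then y ⟨i, h⟩ else 0) * f i = ∑ a : {x // x ∈ S}, y a * f a.1 := by
  classical
  have h1 : ∑ i, (if h : i ∈ S then y ⟨i, h⟩ else 0) * f i
      = ∑ i ∈ S, (if h : i ∈ S then y ⟨i, h⟩ else 0) * f i :=
    (Finset.sum_subset (Finset.subset_univ S) fun i _ hi => by rw [dif_neg hi, zero_mul]).symm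
  rw [h1, ← Finset.sum_coe_sort S]
  exact Finset.sum_congr rfl fun a _ => by rw [dif_pos a.2]

lemma subSub_qf {n : ℕ} (C : Matrix (Fin n) (Fin n) ℝ) (S : Finset (Fin n))
    (y : {x // x ∈ S} → ℝ) :
    ∃ z : Fin n → ℝ, z ⬝ᵥ z = y ⬝ᵥ y ∧ z ⬝ᵥ (C *ᵥ z) = y ⬝ᵥ (subSub C S *ᵥ y) := by
  classical
  set z : Fin n → ℝ := fun i => if h : i ∈ S then y ⟨i, h⟩ else 0 with hz
  refine ⟨z, ?_, ?_⟩
  · calc z ⬝ᵥ z = ∑ a : {x // x ∈ S}, y a * z a.1 := sum_ext S y z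
      _ = y ⬝ᵥ y := Finset.sum_congr rfl fun a _ => by
          rw [hz]; simp only [dif_pos a.2]
  · have hmv : ∀ i : Fin n, (C *ᵥ z) i = ∑ a : {x // x ∈ S}, y a * C i a.1 := by
      intro i
      have : (C *ᵥ z) i = ∑ j, z j * C i j := by
        simp [mulVec, dotProduct, mul_comm]
      rw [this, sum_ext S y (fun j => C i j)]
    calc z ⬝ᵥ (C *ᵥ z) = ∑ a : {x // x ∈ S}, y a * (C *ᵥ z) a.1 := sum_ext S y _
      _ = y ⬝ᵥ (subSub C S *ᵥ y) := by
          refine Finset.sum_congr rfl fun a _ => ?_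
          rw [hmv]
          simp [subSub, mulVec, dotProduct, Finset.mul_sum, mul_comm, mul_left_comm]

lemma subSub_herm {n : ℕ} (C : Matrix (Fin n) (Fin n) ℝ) (hC : Cᵀ = C)
    (S : Finset (Fin n)) : (subSub C S).IsHermitian := by
  ext a b
  have h := congrFun (congrFun hC a.1) b.1
  simpa [subSub, conjTranspose_apply, transpose_apply] using h

/-- A locally optimal `Ŝ` for A-MESP satisfies, for every size-`s` subset
`S`: `tr(C_{Ŝ,Ŝ}⁻¹) ≤ min{(s/2)(1 + L/δ), (1/2)(n + s + (n−s)L/δ)} · tr(C_{S,S}⁻¹)`, where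
`δ > 0` is (a lower bound on) `min_{|T|=s} λ_min(C_{T,T})` and `L` is (an upper bound on)
`λ_max(C)`, both expressed through quadratic forms. -/
theorem stmt_19 (d n s : ℕ) (hs1 : 1 ≤ s) (hsd : s ≤ d)
    (V : Matrix (Fin d) (Fin n) ℝ)
    (δ L : ℝ) (hδpos : 0 < δ)
    (hδ : ∀ T : Finset (Fin n), T.card = s → ∀ y : {x // x ∈ T} → ℝ,
      δ * (y ⬝ᵥ y) ≤ y ⬝ᵥ (subSub (Vᵀ * V) T *ᵥ y))
    (hL : ∀ y : Fin n → ℝ, y ⬝ᵥ ((Vᵀ * V) *ᵥ y) ≤ L * (y ⬝ᵥ y))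
    (Shat : Finset (Fin n)) (hcard : Shat.card = s)
    (hloc : ∀ i ∈ Shat, ∀ j ∉ Shat,
      Matrix.trace (subSub (Vᵀ * V) Shat)⁻¹ ≤
        Matrix.trace (subSub (Vᵀ * V) (insert j (Shat.erase i)))⁻¹) :
    ∀ S : Finset (Fin n), S.card = s →
      Matrix.trace (subSub (Vᵀ * V) Shat)⁻¹ ≤
        min ((s : ℝ) / 2 * (1 + L / δ))
            (1 / 2 * ((n : ℝ) + s + ((n : ℝ) - s) * L / δ)) *
          Matrix.trace (subSub (Vᵀ * V) S)⁻¹ := by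
  intro S hS
  classical
  set C := Vᵀ * V with hCdef
  have hCsymm : Cᵀ = C := by rw [hCdef, transpose_mul, transpose_transpose]
  have hup : ∀ T : Finset (Fin n), ∀ y : {x // x ∈ T} → ℝ,
      y ⬝ᵥ (subSub C T *ᵥ y) ≤ L * (y ⬝ᵥ y) := by
    intro T y
    obtain ⟨z, hz1, hz2⟩ := subSub_qf C T y
    rw [← hz2, ← hz1]
    exact hL z
  have key : ∀ T : Finset (Fin n), T.card = s →
      (s : ℝ) / L ≤ (subSub C T)⁻¹.trace ∧ (subSub C T)⁻¹.trace ≤ (s : ℝ) / δ := by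
    intro T hT
    have hne : Nonempty {x // x ∈ T} := by
      obtain ⟨a, ha⟩ := Finset.card_pos.mp (by omega : 0 < T.card)
      exact ⟨⟨a, ha⟩⟩
    have := trace_inv_bounds (subSub C T) (subSub_herm C hCsymm T) δ L hδpos
      (hδ T hT) (hup T)
    rwa [Fintype.card_coe, hT] at this
  obtain ⟨hSlb, -⟩ := key S hS
  obtain ⟨-, hShat_ub⟩ := key Shat hcard
  have hsn : s ≤ n := by
    have := Finset.card_le_univ Shat
    rwa [hcard, Fintype.card_fin] at this
  have hδL : δ ≤ L := by
    obtain ⟨a, ha⟩ := Finset.card_pos.mp (by omega : 0 < Shat.card)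
    set y : {x // x ∈ Shat} → ℝ := Pi.single ⟨a, ha⟩ 1 with hy
    have h1 := (hδ Shat hcard y).trans (hup Shat y)
    have hy0 : y ≠ 0 := fun h => by
      have := congrFun h ⟨a, ha⟩
      simp [hy] at this
    have hp : 0 < y ⬝ᵥ y := by
      rcases lt_or_eq_of_le (Finset.sum_nonneg fun j _ => mul_self_nonneg (y j)) with h | h
      · exact h
      · exact absurd ((dotProduct_self_eq_zero).mp h.symm) hy0
    rw [mul_comm δ, mul_comm L] at h1
    exact le_of_mul_le_mul_left h1 hp
  have hL0 : 0 < L := hδpos.trans_le hδL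
  have hr : (1 : ℝ) ≤ L / δ := (one_le_div hδpos).mpr hδL
  have hs1' : (1 : ℝ) ≤ (s : ℝ) := by exact_mod_cast hs1
  have hsn' : (s : ℝ) ≤ (n : ℝ) := by exact_mod_cast hsn
  have hdiv : ((n : ℝ) - s) * L / δ = ((n : ℝ) - s) * (L / δ) := by ring
  have htpos : (0 : ℝ) ≤ (subSub C S)⁻¹.trace :=
    le_trans (div_nonneg (by positivity) hL0.le) hSlb
  have hM1 : (1 : ℝ) ≤ min ((s : ℝ) / 2 * (1 + L / δ))
      (1 / 2 * ((n : ℝ) + s + ((n : ℝ) - s) * L / δ)) := by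
    rw [le_min_iff]
    constructor
    · nlinarith
    · rw [hdiv]; nlinarith
  by_cases hcase : 2 ≤ s ∧ s + 2 ≤ n
  · obtain ⟨hs2, hn2⟩ := hcase
    have hs2' : (2 : ℝ) ≤ (s : ℝ) := by exact_mod_cast hs2
    have hn2' : (s : ℝ) + 2 ≤ (n : ℝ) := by exact_mod_cast hn2
    have hMr : L / δ ≤ min ((s : ℝ) / 2 * (1 + L / δ))
        (1 / 2 * ((n : ℝ) + s + ((n : ℝ) - s) * L / δ)) := by
      rw [le_min_iff]
      constructor
      · nlinarith
      · rw [hdiv]; nlinarith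
    have heq : (s : ℝ) / δ = (L / δ) * ((s : ℝ) / L) := by
      field_simp
    calc (subSub C Shat)⁻¹.trace ≤ (s : ℝ) / δ := hShat_ub
      _ = (L / δ) * ((s : ℝ) / L) := heq
      _ ≤ (L / δ) * (subSub C S)⁻¹.trace :=
          mul_le_mul_of_nonneg_left hSlb (div_nonneg hL0.le hδpos.le)
      _ ≤ _ := mul_le_mul_of_nonneg_right hMr htpos
  · have hdir : (subSub C Shat)⁻¹.trace ≤ (subSub C S)⁻¹.trace := by
      by_cases hSeq : S = Shat
      · rw [hSeq]
      rcases Nat.eq_or_lt_of_le hs1 with hs1e | hs2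
      · -- s = 1
        obtain ⟨i, hi⟩ := Finset.card_eq_one.mp (hcard.trans hs1e.symm)
        obtain ⟨j, hj⟩ := Finset.card_eq_one.mp (hS.trans hs1e.symm)
        have hji : j ≠ i := by
          intro h
          exact hSeq (by rw [hj, hi, h])
        have hjn : j ∉ Shat := by rw [hi]; simpa using hji
        have := hloc i (by rw [hi]; exact Finset.mem_singleton_self i) j hjn
        rw [hi, Finset.erase_singleton, Finset.insert_empty, ← hj] at this
        rw [hi]
        exact this
      · -- n ≤ s + 1, S ≠ Shat forces n = s + 1 and |Shat ∩ S| = s - 1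
        have hn1 : n ≤ s + 1 := by omega
        have hneq : n ≠ s := by
          intro h
          apply hSeq
          have h1 : S = Finset.univ := Finset.eq_univ_of_card S (by simp [hS, h])
          have h2 : Shat = Finset.univ := Finset.eq_univ_of_card Shat (by simp [hcard, h])
          rw [h1, h2]
        have hn : n = s + 1 := by omega
        have hu : (Shat ∪ S).card ≤ n := by
          have := Finset.card_le_univ (Shat ∪ S)
          rwa [Fintype.card_fin] at this
        have hie := Finset.card_union_add_card_inter Shat S
        have hile : (Shat ∩ S).card ≤ s :=
          le_trans (Finset.card_le_card Finset.inter_subset_left) hcard.le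
        have hine : (Shat ∩ S).card ≠ s := by
          intro h
          have h1 : Shat ∩ S = Shat :=
            Finset.eq_of_subset_of_card_le Finset.inter_subset_left (by omega)
          have hsub : Shat ⊆ S := by rw [← h1]; exact Finset.inter_subset_right
          exact hSeq (Finset.eq_of_subset_of_card_le hsub (by omega)).symm
        have hinter : (Shat ∩ S).card = s - 1 := by omega
        have hd1 : (Shat \ S).card = 1 := by
          have := Finset.card_inter_add_card_sdiff Shat S
          omega
        have hd2 : (S \ Shat).card = 1 := by
          have h1 := Finset.card_inter_add_card_sdiff S Shat
          have h2 : (S ∩ Shat).card = (Shat ∩ S).card := by rw [Finset.inter_comm]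
          omega
        obtain ⟨i, hiS⟩ := Finset.card_eq_one.mp hd1
        obtain ⟨j, hjS⟩ := Finset.card_eq_one.mp hd2
        have hmem1 : ∀ x, x ∈ Shat ∧ x ∉ S ↔ x = i := by
          intro x
          rw [← Finset.mem_sdiff, hiS, Finset.mem_singleton]
        have hmem2 : ∀ x, x ∈ S ∧ x ∉ Shat ↔ x = j := by
          intro x
          rw [← Finset.mem_sdiff, hjS, Finset.mem_singleton]
        have hi1 : i ∈ Shat ∧ i ∉ S := (hmem1 i).mpr rfl
        have hj1 : j ∈ S ∧ j ∉ Shat := (hmem2 j).mpr rfl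
        have hij : insert j (Shat.erase i) = S := by
          ext x
          have h1 := hmem1 x
          have h2 := hmem2 x
          simp only [Finset.mem_insert, Finset.mem_erase]
          constructor
          · rintro (rfl | ⟨hxi, hxS⟩)
            · exact hj1.1
            · by_contra hxnS
              exact hxi (h1.mp ⟨hxS, hxnS⟩)
          · intro hxS
            by_cases hxSh : x ∈ Shat
            · right
              refine ⟨fun h => hi1.2 (h ▸ hxS), hxSh⟩
            · left
              exact h2.mp ⟨hxS, hxSh⟩
        have := hloc i hi1.1 j hj1.2
        rwa [hij] at this
    calc (subSub C Shat)⁻¹.trace ≤ (subSub C S)⁻¹.trace := hdir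
      _ = 1 * (subSub C S)⁻¹.trace := (one_mul _).symm
      _ ≤ _ := mul_le_mul_of_nonneg_right hM1 htpos
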